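/- Let Ω ⊆ ℝ^d be measurable, ε > 0, k > 0, and let u, v, w : ℝ^d → ℝ be differentiable with all the integrands below integrable on Ω. Suppose u is an unconstrained minimizer of J_Q(·;v) along the direction w, in the sense that J_Q(u + t·w; v) ≥ J_Q(u;v) for every real t. Then the first variation vanishes: ∫_Ω ( ⟨∇u(x), ∇w(x)⟩ + (1/k)(u(x)−v(x))·w(x) + (1/ε²)( 2 v(x)² u(x) − v(x)³ − v(x) )·w(x) ) dx = 0; this is the weak form of the first-order IEQ scheme (u^n − u^{n−1})/k = Δu^n − (2/ε²)(u^{n−1})² u^n + (1/ε²)(u^{n−1})³ + (1/ε²)u^{n−1}. -/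

import Mathlib

open MeasureTheory

/-- linearization of the double-well factor `p(s) = (1/2)(s²−1)` at `t`. -/
noncomputable def pL (s t : ℝ) : ℝ := t * s - (1/2) * t^2 - 1/2

/-- integrand of the double-well energy `E`. -/
noncomputable def Eint {d : ℕ} (ε : ℝ) (u : EuclideanSpace ℝ (Fin d) → ℝ)
    (x : EuclideanSpace ℝ (Fin d)) : ℝ :=
  (1/2) * ‖gradient u x‖^2 + (1/ε^2) * ((1/4) * (u x ^ 2 - 1)^2)

/-- the double-well energy `E(u) = ∫_Ω (1/2)|∇u|² + (1/ε²)F(u)`. -/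
noncomputable def E {d : ℕ} (Ω : Set (EuclideanSpace ℝ (Fin d))) (ε : ℝ)
    (u : EuclideanSpace ℝ (Fin d) → ℝ) : ℝ :=
  ∫ x in Ω, Eint ε u x

/-- integrand of the quadratic approximate energy `E_Q(·;v)`. -/
noncomputable def EQint {d : ℕ} (ε : ℝ) (u v : EuclideanSpace ℝ (Fin d) → ℝ)
    (x : EuclideanSpace ℝ (Fin d)) : ℝ :=
  (1/2) * ‖gradient u x‖^2 + (1/ε^2) * (pL (u x) (v x))^2

/-- the quadratic approximate energy `E_Q(u;v)`. -/
noncomputable def EQ {d : ℕ} (Ω : Set (EuclideanSpace ℝ (Fin d))) (ε : ℝ)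
    (u v : EuclideanSpace ℝ (Fin d) → ℝ) : ℝ :=
  ∫ x in Ω, EQint ε u v x

/-- integrand of the time-discrete quadratic functional `J_Q(·;v)` with time step `k`. -/
noncomputable def JQint {d : ℕ} (ε k : ℝ) (u v : EuclideanSpace ℝ (Fin d) → ℝ)
    (x : EuclideanSpace ℝ (Fin d)) : ℝ :=
  (1/2) * ‖gradient u x‖^2 + (1/(2*k)) * (u x - v x)^2 + (1/ε^2) * (pL (u x) (v x))^2

/-- the time-discrete quadratic functional `J_Q(u;v)`. -/
noncomputable def JQ {d : ℕ} (Ω : Set (EuclideanSpace ℝ (Fin d))) (ε k : ℝ)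
    (u v : EuclideanSpace ℝ (Fin d) → ℝ) : ℝ :=
  ∫ x in Ω, JQint ε k u v x

open scoped RealInnerProductSpace

lemma gradient_add_smul' {d : ℕ} (u w : EuclideanSpace ℝ (Fin d) → ℝ)
    (hu : Differentiable ℝ u) (hw : Differentiable ℝ w) (t : ℝ)
    (x : EuclideanSpace ℝ (Fin d)) :
    gradient (fun y => u y + t * w y) x = gradient u x + t • gradient w x := by
  unfold gradient
  rw [fderiv_fun_add (hu x) ((hw x).const_mul t), fderiv_const_mul (hw x), map_add, _root_.map_smul]

lemma JQint_expand {d : ℕ} (ε k : ℝ) (u v w : EuclideanSpace ℝ (Fin d) → ℝ)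
    (hu : Differentiable ℝ u) (hw : Differentiable ℝ w) (t : ℝ)
    (x : EuclideanSpace ℝ (Fin d)) :
    JQint ε k (fun y => u y + t * w y) v x =
      JQint ε k u v x
      + t * (⟪gradient u x, gradient w x⟫ + (1/k) * (u x - v x) * w x
          + (1/ε^2) * (2 * (v x)^2 * u x - (v x)^3 - v x) * w x)
      + t^2 * ((1/2) * ‖gradient w x‖^2 + (1/(2*k)) * (w x)^2
          + (1/ε^2) * (v x * w x)^2) := by
  have hg := gradient_add_smul' u w hu hw t x
  simp only [JQint, pL, hg]
  rw [norm_add_sq_real, real_inner_smul_right, norm_smul, Real.norm_eq_abs, mul_pow, sq_abs]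
  ring

/-- A real quadratic `t ↦ t*A + t²*B` that is nonnegative for all `t` has `A = 0`. -/
lemma quad_nonneg_lin_zero (A B : ℝ) (h : ∀ t : ℝ, 0 ≤ t * A + t^2 * B) : A = 0 := by
  have hB : (0:ℝ) < B^2 + 1 := by positivity
  have h1 := h (-A / (B^2 + 1))
  have h2 : 0 ≤ ((-A / (B^2+1)) * A + (-A / (B^2+1))^2 * B) * (B^2+1)^2 :=
    mul_nonneg h1 (by positivity)
  have h3 : ((-A / (B^2+1)) * A + (-A / (B^2+1))^2 * B) * (B^2+1)^2
      = A^2 * (B - B^2 - 1) := by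
    field_simp
    ring
  rw [h3] at h2
  have hA2 : A^2 ≤ 0 := by nlinarith [sq_nonneg (2*B - 1), sq_nonneg A]
  have : A^2 = 0 := le_antisymm hA2 (sq_nonneg A)
  exact (pow_eq_zero_iff (two_ne_zero)).mp this

/-- vanishing first variation of `J_Q(·;v)`, weak form of the
first-order IEQ scheme: if `J_Q(u + t·w;v) ≥ J_Q(u;v)` for every real `t`, then
`∫_Ω (⟨∇u,∇w⟩ + (1/k)(u−v)w + (1/ε²)(2v²u − v³ − v)w) = 0`. -/
theorem JQ_first_variation_zero {d : ℕ} (Ω : Set (EuclideanSpace ℝ (Fin d)))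
    (hΩ : MeasurableSet Ω) (ε k : ℝ) (hε : 0 < ε) (hk : 0 < k)
    (u v w : EuclideanSpace ℝ (Fin d) → ℝ)
    (hu : Differentiable ℝ u) (hv : Differentiable ℝ v) (hw : Differentiable ℝ w)
    (hJQ : ∀ t : ℝ, IntegrableOn (JQint ε k (fun x => u x + t * w x) v) Ω)
    (hFV : IntegrableOn (fun x => ⟪gradient u x, gradient w x⟫
      + (1/k) * (u x - v x) * w x
      + (1/ε^2) * (2 * (v x)^2 * u x - (v x)^3 - v x) * w x) Ω)
    (hmin : ∀ t : ℝ, JQ Ω ε k u v ≤ JQ Ω ε k (fun x => u x + t * w x) v) :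
    (∫ x in Ω, (⟪gradient u x, gradient w x⟫
      + (1/k) * (u x - v x) * w x
      + (1/ε^2) * (2 * (v x)^2 * u x - (v x)^3 - v x) * w x)) = 0 := by
  set G : EuclideanSpace ℝ (Fin d) → ℝ := fun x => ⟪gradient u x, gradient w x⟫
      + (1/k) * (u x - v x) * w x
      + (1/ε^2) * (2 * (v x)^2 * u x - (v x)^3 - v x) * w x with hG
  set H : EuclideanSpace ℝ (Fin d) → ℝ := fun x => (1/2) * ‖gradient w x‖^2
      + (1/(2*k)) * (w x)^2 + (1/ε^2) * (v x * w x)^2 with hH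
  -- integrability of the base integrand
  have hu0 : (fun x => u x + (0:ℝ) * w x) = u := by funext x; ring
  have hJu : IntegrableOn (JQint ε k u v) Ω := by
    have := hJQ 0; rwa [hu0] at this
  -- integrability of H
  have hHint : IntegrableOn H Ω := by
    have h1 := hJQ 1
    have hm1 := hJQ (-1)
    have heq : H = fun x => (1/2) * (JQint ε k (fun y => u y + (1:ℝ) * w y) v x
        + JQint ε k (fun y => u y + (-1:ℝ) * w y) v x) - JQint ε k u v x := by
      funext x
      rw [JQint_expand ε k u v w hu hw 1 x, JQint_expand ε k u v w hu hw (-1) x]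
      simp only [hH, hG]
      ring
    rw [heq]
    exact (((h1.add hm1).const_mul (1/2)).sub hJu)
  set A := ∫ x in Ω, G x with hA
  set B := ∫ x in Ω, H x with hB
  have key : ∀ t : ℝ, JQ Ω ε k (fun x => u x + t * w x) v
      = JQ Ω ε k u v + t * A + t^2 * B := by
    intro t
    have : JQ Ω ε k (fun x => u x + t * w x) v
        = ∫ x in Ω, (JQint ε k u v x + t * G x + t^2 * H x) := by
      unfold JQ
      apply integral_congr_ae
      filter_upwards with x
      exact JQint_expand ε k u v w hu hw t x
    have e1 : (∫ x in Ω, (JQint ε k u v x + t * G x + t^2 * H x))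
        = (∫ x in Ω, (JQint ε k u v x + t * G x)) + ∫ x in Ω, t^2 * H x :=
      integral_add (hJu.add (hFV.const_mul t)) (hHint.const_mul (t^2))
    have e2 : (∫ x in Ω, (JQint ε k u v x + t * G x))
        = (∫ x in Ω, JQint ε k u v x) + ∫ x in Ω, t * G x :=
      integral_add hJu (hFV.const_mul t)
    rw [this, e1, e2, integral_const_mul, integral_const_mul]
    rfl
  have hquad : ∀ t : ℝ, 0 ≤ t * A + t^2 * B := by
    intro t
    have := hmin t
    rw [key t] at this
    linarith
  exact quad_nonneg_lin_zero A B hquad
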